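/- Let r : ℕ → (0,∞) satisfy r(n) ≥ 9.27·√(log n) for all sufficiently large n. Then for the random geometric graph G ∈ 𝒢(n, r(n)), the probability that χ_c(G) = 2 tends to 1 as n → ∞. -/

import Mathlib

open Filter MeasureTheory SimpleGraph

set_option linter.unusedVariables false
set_option maxHeartbeats 1000000

/-- A clique colouring with `k` colours: no maximal clique containing at least
two vertices is monochromatic. -/
def IsCliqueColouring {V : Type*} {k : ℕ} (G : SimpleGraph V) (c : V → Fin k) : Prop :=
  ∀ S : Set V, Maximal G.IsClique S → 2 ≤ S.ncard → ¬ ∃ a : Fin k, ∀ v ∈ S, c v = a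

/-- The clique chromatic number: the least number of colours in a clique colouring. -/
noncomputable def cliqueChromNum {V : Type*} (G : SimpleGraph V) : ℕ :=
  sInf {k : ℕ | ∃ c : V → Fin k, IsCliqueColouring G c}

/-- The geometric graph on `n` points of the plane with threshold `r`. -/
def geomGraph {n : ℕ} (r : ℝ) (x : Fin n → EuclideanSpace ℝ (Fin 2)) : SimpleGraph (Fin n) where
  Adj i j := i ≠ j ∧ dist (x i) (x j) ≤ r
  symm := ⟨fun i j h => ⟨h.1.symm, dist_comm (x i) (x j) ▸ h.2⟩⟩
  loopless := ⟨fun i h => h.1 rfl⟩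

/-- The square `S_n = [-√n/2, √n/2]²`. -/
def rggSquare (n : ℕ) : Set (EuclideanSpace ℝ (Fin 2)) :=
  {p | ∀ i, |p i| ≤ Real.sqrt n / 2}

/-- The distribution of `n` points sampled independently and uniformly at random from
the square `S_n`: the product over `Fin n` of Lebesgue measure restricted to `S_n`,
normalised by the area `n` of `S_n` (one factor `n⁻¹` for each of the `n` points). -/
noncomputable def rggMeasure (n : ℕ) : Measure (Fin n → EuclideanSpace ℝ (Fin 2)) :=
  ((n : ENNReal)⁻¹) ^ n • Measure.pi (fun _ : Fin n => volume.restrict (rggSquare n))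


open Metric


local notation "Pt" => EuclideanSpace ℝ (Fin 2)

lemma centroid_bound {ι : Type*} {K : Finset ι} (hK : K.Nonempty) (hcard : K.card ≤ 3)
    (x : ι → Pt) {r : ℝ}
    (hpair : ∀ i ∈ K, ∀ j ∈ K, dist (x i) (x j) ≤ r) :
    ∃ z : Pt, ∀ i ∈ K, dist z (x i) ≤ 2/3 * r := by
  classical
  set m := K.card with hm
  have hm0 : 0 < m := hK.card_pos
  obtain ⟨i₀, hi₀⟩ := hK
  have hr : 0 ≤ r := le_trans dist_nonneg (hpair _ hi₀ _ hi₀)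
  refine ⟨(m : ℝ)⁻¹ • ∑ j ∈ K, x j, fun i hi => ?_⟩
  have key : (m : ℝ)⁻¹ • ∑ j ∈ K, x j - x i = (m : ℝ)⁻¹ • ∑ j ∈ K, (x j - x i) := by
    rw [Finset.sum_sub_distrib, smul_sub, Finset.sum_const, ← hm]
    congr 1
    rw [← Nat.cast_smul_eq_nsmul ℝ, inv_smul_smul₀]
    positivity
  rw [dist_eq_norm, key, norm_smul]
  have hsum : ‖∑ j ∈ K, (x j - x i)‖ ≤ (m - 1 : ℝ) * r := by
    calc ‖∑ j ∈ K, (x j - x i)‖ ≤ ∑ j ∈ K, ‖x j - x i‖ := norm_sum_le _ _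
    _ = ∑ j ∈ K.erase i, ‖x j - x i‖ := by
        rw [← Finset.sum_erase K (show ‖x i - x i‖ = 0 by simp)]
    _ ≤ ∑ j ∈ K.erase i, r := Finset.sum_le_sum fun j hj =>
        (dist_eq_norm (x j) (x i)) ▸ hpair j (Finset.mem_of_mem_erase hj) i hi
    _ = ((K.erase i).card : ℝ) * r := by rw [Finset.sum_const, nsmul_eq_mul]
    _ = (m - 1 : ℝ) * r := by
        rw [Finset.card_erase_of_mem hi, ← hm]
        congr 1
        have : 1 ≤ m := hm0
        push_cast [Nat.cast_sub this]
        ring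
  have h1 : ‖(m : ℝ)⁻¹‖ = (m : ℝ)⁻¹ := by
    rw [Real.norm_eq_abs, abs_of_nonneg (by positivity)]
  rw [h1]
  have hmr : (m:ℝ)⁻¹ * ((m - 1 : ℝ) * r) ≤ 2/3 * r := by
    interval_cases m <;> [skip; skip; skip] <;> norm_num <;> nlinarith
  calc (m:ℝ)⁻¹ * ‖∑ j ∈ K, (x j - x i)‖ ≤ (m:ℝ)⁻¹ * ((m-1:ℝ) * r) := by
        apply mul_le_mul_of_nonneg_left hsum (by positivity)
  _ ≤ 2/3 * r := hmr

lemma jung23 {ι : Type*} {K : Finset ι} (x : ι → Pt) {r : ℝ} (hr : 0 ≤ r)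
    (hpair : ∀ i ∈ K, ∀ j ∈ K, dist (x i) (x j) ≤ r) :
    ∃ z : Pt, ∀ i ∈ K, dist z (x i) ≤ 2/3 * r := by
  classical
  have h := Convex.helly_theorem' (𝕜 := ℝ)
      (F := fun i => closedBall (x i) (2/3 * r)) (s := K)
      (fun i _ => convex_closedBall _ _) ?_
  · obtain ⟨z, hz⟩ := h
    exact ⟨z, fun i hi => by
      have := Set.mem_iInter₂.mp hz i hi
      simpa [mem_closedBall, dist_comm] using this⟩
  · intro I hI hIcard
    rcases I.eq_empty_or_nonempty with rfl | hI0
    · simp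
    have hIc : I.card ≤ 3 := by
      rw [finrank_euclideanSpace_fin] at hIcard; omega
    obtain ⟨z, hz⟩ := centroid_bound hI0 hIc x
      (fun i hi j hj => hpair i (hI hi) j (hI hj))
    exact ⟨z, Set.mem_biInter fun i hi =>
      mem_closedBall.mpr (dist_comm z (x i) ▸ hz i hi)⟩


/-- Column selection: a grid column of width `u` with prescribed strip parity `b`,
inside `[0, 2mu]`, close to `t`. -/
lemma exists_column {u : ℝ} (hu : 0 < u) {m : ℕ} (hm : 2 ≤ m) (b : ℕ) {t : ℝ}
    (ht0 : 0 ≤ t) (ht1 : t ≤ 2 * m * u) :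
    ∃ i : ℕ, i < 2 * m ∧ (i / 2) % 2 = b % 2 ∧
      t - 3 * u ≤ i * u ∧ (i : ℝ) * u ≤ t + 2 * u := by
  have h2u : (0:ℝ) < 2 * u := by linarith
  set f : ℤ := ⌊t / (2 * u)⌋ with hf
  have hf0 : 0 ≤ f := Int.floor_nonneg.mpr (by positivity)
  set k : ℕ := min f.toNat (m - 1) with hk
  have hkm : k ≤ m - 1 := min_le_right _ _
  have hkf : (k : ℤ) ≤ f := by
    have : k ≤ f.toNat := min_le_left _ _
    omega
  have hlow : 2 * (k:ℝ) * u ≤ t := by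
    have : (k : ℝ) ≤ t / (2 * u) := le_trans (by exact_mod_cast hkf) (Int.floor_le _)
    calc 2 * (k:ℝ) * u = (k:ℝ) * (2*u) := by ring
    _ ≤ (t / (2*u)) * (2*u) := by nlinarith
    _ = t := by field_simp
  have hhigh : t ≤ 2 * ((k:ℝ) + 1) * u := by
    rcases le_or_gt f.toNat (m - 1) with hc | hc
    · have hkef : (k : ℤ) = f := by omega
      have : t / (2*u) < f + 1 := Int.lt_floor_add_one _
      have h2 : t < ((f:ℝ) + 1) * (2*u) := by
        have := (div_lt_iff₀ h2u).mp this
        linarith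
      have : ((k:ℝ)) = (f:ℝ) := by exact_mod_cast congrArg (fun z : ℤ => (z:ℝ)) hkef
      nlinarith
    · have hkeq : k = m - 1 := by omega
      have : ((k:ℝ) + 1) = (m:ℝ) := by
        have : (k : ℕ) + 1 = m := by omega
        exact_mod_cast this
      rw [this]; linarith
  by_cases hpar : k % 2 = b % 2
  · refine ⟨2 * k, by omega, by omega, ?_, ?_⟩
    · push_cast; nlinarith
    · push_cast; nlinarith
  · rcases le_or_gt (k + 1) (m - 1) with hc | hc
    · refine ⟨2 * (k + 1), by omega, by omega, ?_, ?_⟩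
      · push_cast; nlinarith
      · push_cast; nlinarith
    · -- k = m - 1, use column 2k - 1
      have hk1 : 1 ≤ k := by omega
      refine ⟨2 * k - 1, by omega, ?_, ?_, ?_⟩
      · have : (2 * k - 1) / 2 = k - 1 := by omega
        rw [this]; omega
      · have : ((2 * k - 1 : ℕ) : ℝ) = 2 * (k:ℝ) - 1 := by
          push_cast [Nat.cast_sub (by omega : 1 ≤ 2 * k)]; ring
        rw [this]; nlinarith
      · have : ((2 * k - 1 : ℕ) : ℝ) = 2 * (k:ℝ) - 1 := by
          push_cast [Nat.cast_sub (by omega : 1 ≤ 2 * k)]; ring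
        rw [this]; nlinarith

/-- Row selection: a grid row of height `2u` inside `[0, 2mu]`, close to `t`. -/
lemma exists_row {u : ℝ} (hu : 0 < u) {m : ℕ} (hm : 2 ≤ m) {t : ℝ}
    (ht0 : 0 ≤ t) (ht1 : t ≤ 2 * m * u) :
    ∃ j : ℕ, j ≤ 2 * m - 2 ∧ t - 2 * u ≤ j * u ∧ (j : ℝ) * u ≤ t := by
  set f : ℤ := ⌊t / u⌋ with hf
  have hf0 : 0 ≤ f := Int.floor_nonneg.mpr (by positivity)
  set j : ℕ := min f.toNat (2 * m - 2) with hj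
  have hjf : (j : ℤ) ≤ f := by
    have : j ≤ f.toNat := min_le_left _ _
    omega
  refine ⟨j, min_le_right _ _, ?_, ?_⟩
  · rcases le_or_gt f.toNat (2 * m - 2) with hc | hc
    · have hkef : (j : ℤ) = f := by omega
      have h2 : t / u < f + 1 := Int.lt_floor_add_one _
      have : ((j:ℝ)) = (f:ℝ) := by exact_mod_cast congrArg (fun z : ℤ => (z:ℝ)) hkef
      have := (div_lt_iff₀ hu).mp h2
      nlinarith
    · have hjeq : j = 2 * m - 2 := by omega
      have : ((j:ℝ)) = 2 * (m:ℝ) - 2 := by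
        rw [hjeq]; push_cast [Nat.cast_sub (by omega : 2 ≤ 2 * m)]; ring
      rw [this]; nlinarith
  · have : (j : ℝ) ≤ t / u := le_trans (by exact_mod_cast hjf) (Int.floor_le _)
    calc (j:ℝ) * u ≤ (t / u) * u := by nlinarith
    _ = t := by field_simp

/-- colour determination: `ξ` in column `i` lies in strip `i / 2`. -/
lemma floor_of_mem_column {u : ℝ} (hu : 0 < u) {i : ℕ} {ξ : ℝ}
    (h1 : (i:ℝ) * u ≤ ξ) (h2 : ξ < (i:ℝ) * u + u) :
    ⌊ξ / (2 * u)⌋ = (i / 2 : ℕ) := by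
  have h2u : (0:ℝ) < 2 * u := by linarith
  have ha : (2 * (i / 2) : ℕ) ≤ i := by omega
  have hb : (i + 1 : ℕ) ≤ 2 * (i / 2) + 2 := by omega
  have ha' : 2 * ((i/2 : ℕ) : ℝ) ≤ (i : ℝ) := by exact_mod_cast ha
  have hb' : ((i:ℝ) + 1) ≤ 2 * ((i/2 : ℕ) : ℝ) + 2 := by exact_mod_cast hb
  have hcast : ((((i / 2 : ℕ) : ℤ)) : ℝ) = ((i/2 : ℕ) : ℝ) := by push_cast; rfl
  rw [Int.floor_eq_iff]
  constructor
  · rw [le_div_iff₀ h2u, hcast]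
    nlinarith
  · rw [div_lt_iff₀ h2u, hcast]
    nlinarith

lemma euclidean_set_eq (S : Fin 2 → Set ℝ) :
    {p : EuclideanSpace ℝ (Fin 2) | ∀ i, p i ∈ S i}
      = (MeasurableEquiv.toLp 2 (Fin 2 → ℝ)).symm ⁻¹' (Set.univ.pi S) := by
  ext p
  simp [Set.mem_pi, MeasurableEquiv.toLp]
  exact Iff.rfl

lemma euclidean_volume_pi (S : Fin 2 → Set ℝ) (hS : ∀ i, MeasurableSet (S i)) :
    volume {p : EuclideanSpace ℝ (Fin 2) | ∀ i, p i ∈ S i} = ∏ i, volume (S i) := by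
  rw [euclidean_set_eq]
  rw [MeasurePreserving.measure_preimage
    (EuclideanSpace.volume_preserving_symm_measurableEquiv_toLp (Fin 2))
    (MeasurableSet.univ_pi hS).nullMeasurableSet]
  rw [volume_pi, Measure.pi_pi]

lemma euclidean_measurable_pi (S : Fin 2 → Set ℝ) (hS : ∀ i, MeasurableSet (S i)) :
    MeasurableSet {p : EuclideanSpace ℝ (Fin 2) | ∀ i, p i ∈ S i} := by
  rw [euclidean_set_eq]
  exact (MeasurableEquiv.toLp 2 (Fin 2 → ℝ)).symm.measurable (MeasurableSet.univ_pi hS)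

lemma rggSquare_eq (n : ℕ) :
    rggSquare n = {p : EuclideanSpace ℝ (Fin 2) |
      ∀ i, p i ∈ Set.Icc (-(Real.sqrt n / 2)) (Real.sqrt n / 2)} := by
  ext p
  simp [rggSquare, abs_le, Set.mem_Icc]

lemma volume_rggSquare (n : ℕ) : volume (rggSquare n) = (n : ENNReal) := by
  rw [rggSquare_eq, euclidean_volume_pi _ (fun i => measurableSet_Icc)]
  rw [Real.volume_Icc]
  rw [show Real.sqrt n / 2 - -(Real.sqrt n / 2) = Real.sqrt n by ring]
  rw [Finset.prod_const, Finset.card_univ, Fintype.card_fin, ← ENNReal.ofReal_pow (Real.sqrt_nonneg _)]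
  rw [sq, Real.mul_self_sqrt (Nat.cast_nonneg n), ENNReal.ofReal_natCast]

lemma measurableSet_rggSquare (n : ℕ) : MeasurableSet (rggSquare n) := by
  rw [rggSquare_eq]
  exact euclidean_measurable_pi _ (fun i => measurableSet_Icc)

lemma rggMeasure_univ {n : ℕ} (hn : 0 < n) : rggMeasure n Set.univ = 1 := by
  rw [rggMeasure, Measure.smul_apply, smul_eq_mul, Measure.pi_univ]
  simp only [Measure.restrict_apply_univ, volume_rggSquare]
  rw [Finset.prod_const, Finset.card_univ, Fintype.card_fin, ← mul_pow,
    ENNReal.inv_mul_cancel (by exact_mod_cast hn.ne' : (n:ENNReal) ≠ 0) (by simp), one_pow]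

def rggCell (u s : ℝ) (i j : ℕ) : Set (EuclideanSpace ℝ (Fin 2)) :=
  {p | (i:ℝ) * u ≤ p 0 + s ∧ p 0 + s < (i:ℝ) * u + u ∧
       (j:ℝ) * u ≤ p 1 + s ∧ p 1 + s < (j:ℝ) * u + 2 * u}

lemma rggCell_eq (u s : ℝ) (i j : ℕ) :
    rggCell u s i j = {p : EuclideanSpace ℝ (Fin 2) | ∀ k,
      p k ∈ (fun k : Fin 2 => if k = 0 then Set.Ico ((i:ℝ)*u - s) ((i:ℝ)*u + u - s)
        else Set.Ico ((j:ℝ)*u - s) ((j:ℝ)*u + 2*u - s)) k} := by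
  ext p
  simp only [rggCell, Set.mem_setOf_eq, Fin.forall_fin_two, if_pos rfl,
    if_neg (by decide : (1 : Fin 2) ≠ 0), Set.mem_Ico]
  constructor
  · rintro ⟨h1, h2, h3, h4⟩
    exact ⟨⟨by linarith, by linarith⟩, ⟨by linarith, by linarith⟩⟩
  · rintro ⟨⟨h1, h2⟩, ⟨h3, h4⟩⟩
    exact ⟨by linarith, by linarith, by linarith, by linarith⟩

lemma measurableSet_rggCell (u s : ℝ) (i j : ℕ) : MeasurableSet (rggCell u s i j) := by
  rw [rggCell_eq]
  exact euclidean_measurable_pi _ (fun k => by by_cases h : k = 0 <;> simp [h, measurableSet_Ico])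

lemma volume_rggCell {u : ℝ} (hu : 0 ≤ u) (s : ℝ) (i j : ℕ) :
    volume (rggCell u s i j) = ENNReal.ofReal (2 * u^2) := by
  rw [rggCell_eq, euclidean_volume_pi _ (fun k => by by_cases h : k = 0 <;> simp [h, measurableSet_Ico])]
  rw [Fin.prod_univ_two]
  rw [if_pos rfl, if_neg (by decide : ¬(1 : Fin 2) = 0)]
  rw [Real.volume_Ico, Real.volume_Ico]
  rw [show (i:ℝ)*u + u - s - ((i:ℝ)*u - s) = u by ring,
      show (j:ℝ)*u + 2*u - s - ((j:ℝ)*u - s) = 2*u by ring]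
  rw [← ENNReal.ofReal_mul hu]
  congr 1
  ring

lemma rggCell_subset {n m : ℕ} {u : ℝ} (hu : 0 < u) (hn : Real.sqrt n = 2 * m * u)
    {i j : ℕ} (hi : i < 2 * m) (hj : j + 2 ≤ 2 * m) :
    rggCell u (m * u) i j ⊆ rggSquare n := by
  intro p hp
  obtain ⟨h1, h2, h3, h4⟩ := hp
  intro k
  rw [hn, show 2 * (m:ℝ) * u / 2 = m * u by ring]
  have hi' : (i:ℝ) + 1 ≤ 2 * m := by exact_mod_cast hi
  have hj' : (j:ℝ) + 2 ≤ 2 * m := by exact_mod_cast hj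
  have hiu : (0:ℝ) ≤ (i:ℝ) * u := by positivity
  have hju : (0:ℝ) ≤ (j:ℝ) * u := by positivity
  fin_cases k
  · show |p 0| ≤ (m:ℝ) * u
    rw [abs_le]
    exact ⟨by linarith, by nlinarith⟩
  · show |p 1| ≤ (m:ℝ) * u
    rw [abs_le]
    exact ⟨by linarith, by nlinarith⟩

lemma prob_allmiss {n : ℕ} {A : Set (EuclideanSpace ℝ (Fin 2))}
    (hA : MeasurableSet A) (hAs : A ⊆ rggSquare n) :
    rggMeasure n {x | ∀ t, x t ∉ A}
      = ((n : ENNReal)⁻¹ * ((n : ENNReal) - volume A)) ^ n := by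
  have hset : {x : Fin n → EuclideanSpace ℝ (Fin 2) | ∀ t, x t ∉ A}
      = Set.pi Set.univ (fun _ : Fin n => Aᶜ) := by
    ext x; simp [Set.mem_pi]
  rw [rggMeasure, Measure.smul_apply, smul_eq_mul, hset, Measure.pi_pi]
  have hval : (volume.restrict (rggSquare n)) Aᶜ = (n : ENNReal) - volume A := by
    rw [Measure.restrict_apply hA.compl, ← Set.diff_eq_compl_inter]
    rw [measure_diff hAs hA.nullMeasurableSet
      (ne_top_of_le_ne_top (by simp : ((n:ℕ) : ENNReal) ≠ ⊤)
        (by rw [← volume_rggSquare n]; exact measure_mono hAs)),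
      volume_rggSquare]
  rw [hval, Finset.prod_const, Finset.card_univ, Fintype.card_fin, ← mul_pow]

lemma prob_allmiss_le {n : ℕ} (hn : 0 < n) {A : Set (EuclideanSpace ℝ (Fin 2))}
    (hA : MeasurableSet A) (hAs : A ⊆ rggSquare n) {α : ℝ}
    (hα0 : 0 ≤ α) (hαn : α ≤ n) (hvol : volume A = ENNReal.ofReal α) :
    rggMeasure n {x | ∀ t, x t ∉ A} ≤ ENNReal.ofReal (Real.exp (-α)) := by
  rw [prob_allmiss hA hAs, hvol]
  have hn' : (0:ℝ) < n := by exact_mod_cast hn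
  have h1 : (n : ENNReal)⁻¹ * ((n : ENNReal) - ENNReal.ofReal α)
      = ENNReal.ofReal ((n - α) / n) := by
    rw [← ENNReal.ofReal_natCast n, ← ENNReal.ofReal_sub _ hα0,
      ← ENNReal.ofReal_inv_of_pos hn', ← ENNReal.ofReal_mul (by positivity)]
    rw [inv_mul_eq_div]
  have hbase : (0:ℝ) ≤ (n - α) / n := div_nonneg (by linarith) hn'.le
  rw [h1, ← ENNReal.ofReal_pow hbase]
  apply ENNReal.ofReal_le_ofReal
  have key : (n - α) / n ≤ Real.exp (-(α / n)) := by
    have h2 := Real.add_one_le_exp (-(α/n))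
    have h3 : 1 - α/n ≤ Real.exp (-(α/n)) := by linarith
    calc (n - α)/n = 1 - α/n := by field_simp
    _ ≤ _ := h3
  calc ((n - α)/n)^n ≤ (Real.exp (-(α/n)))^n := pow_le_pow_left₀ hbase key n
  _ = Real.exp (-α) := by
      rw [← Real.exp_nat_mul]
      congr 1
      field_simp

lemma prob_coord_out {n : ℕ} (t : Fin n) :
    rggMeasure n {x | x t ∉ rggSquare n} = 0 := by
  classical
  have hset : {x : Fin n → EuclideanSpace ℝ (Fin 2) | x t ∉ rggSquare n}
      = Set.pi Set.univ (fun s : Fin n => if s = t then (rggSquare n)ᶜ else Set.univ) := by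
    ext x
    simp only [Set.mem_setOf_eq, Set.mem_pi, Set.mem_univ, forall_true_left]
    constructor
    · intro h s
      by_cases hs : s = t
      · subst hs; simp [h]
      · simp [hs]
    · intro h
      have := h t
      simpa using this
  rw [rggMeasure, Measure.smul_apply, smul_eq_mul, hset, Measure.pi_pi]
  rw [Finset.prod_eq_zero (Finset.mem_univ t)]
  · exact mul_zero _
  · rw [if_pos rfl, Measure.restrict_apply (measurableSet_rggSquare n).compl]
    rw [Set.compl_inter_self]
    exact measure_empty

lemma prob_exists_coord_out {n : ℕ} :
    rggMeasure n {x | ∃ t, x t ∉ rggSquare n} = 0 := by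
  have hsub : {x : Fin n → EuclideanSpace ℝ (Fin 2) | ∃ t, x t ∉ rggSquare n}
      ⊆ ⋃ t : Fin n, {x | x t ∉ rggSquare n} := by
    rintro x ⟨t, ht⟩
    exact Set.mem_iUnion.mpr ⟨t, ht⟩
  apply measure_mono_null hsub
  apply measure_iUnion_null
  exact fun t => prob_coord_out t

def RggGood (n m : ℕ) (u : ℝ) (x : Fin n → EuclideanSpace ℝ (Fin 2)) : Prop :=
  (∀ t, x t ∈ rggSquare n) ∧
  ∀ i < 2 * m, ∀ j ≤ 2 * m - 2, ∃ t, x t ∈ rggCell u (m * u) i j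

lemma good_event_bound {n m : ℕ} {u : ℝ} (hu : 0 < u) (hm : 2 ≤ m) (hn0 : 0 < n)
    (hn : Real.sqrt n = 2 * m * u) (h2un : 2 * u ^ 2 ≤ n) :
    1 ≤ rggMeasure n {x | RggGood n m u x}
        + ENNReal.ofReal ((2*m) * (2*m-1) * Real.exp (-(2*u^2))) := by
  classical
  set s : Finset (ℕ × ℕ) := Finset.range (2*m) ×ˢ Finset.range (2*m-1) with hs
  have hcover : (Set.univ : Set (Fin n → EuclideanSpace ℝ (Fin 2)))
      ⊆ {x | RggGood n m u x} ∪
        ({x | ∃ t, x t ∉ rggSquare n} ∪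
          ⋃ p ∈ s, {x | ∀ t, x t ∉ rggCell u (m * u) p.1 p.2}) := by
    intro x _
    by_cases hg : RggGood n m u x
    · exact Or.inl hg
    · right
      rw [RggGood] at hg
      push_neg at hg
      by_cases hsq : ∀ t, x t ∈ rggSquare n
      · obtain ⟨i, hi, j, hj, hcell⟩ := hg hsq
        refine Or.inr (Set.mem_biUnion (show ((i,j) : ℕ × ℕ) ∈ s from ?_) hcell)
        rw [hs, Finset.mem_product]
        exact ⟨Finset.mem_range.mpr hi, Finset.mem_range.mpr (by omega)⟩
      · push_neg at hsq
        exact Or.inl hsq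
  have h1 : (1 : ENNReal) = rggMeasure n Set.univ := (rggMeasure_univ hn0).symm
  rw [h1]
  calc rggMeasure n Set.univ
      ≤ rggMeasure n ({x | RggGood n m u x} ∪
        ({x | ∃ t, x t ∉ rggSquare n} ∪
          ⋃ p ∈ s, {x | ∀ t, x t ∉ rggCell u (m * u) p.1 p.2})) := measure_mono hcover
  _ ≤ rggMeasure n {x | RggGood n m u x}
      + rggMeasure n ({x | ∃ t, x t ∉ rggSquare n} ∪
          ⋃ p ∈ s, {x | ∀ t, x t ∉ rggCell u (m * u) p.1 p.2}) := measure_union_le _ _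
  _ ≤ rggMeasure n {x | RggGood n m u x}
      + ENNReal.ofReal ((2*m) * (2*m-1) * Real.exp (-(2*u^2))) := by
      gcongr
      calc rggMeasure n ({x | ∃ t, x t ∉ rggSquare n} ∪
          ⋃ p ∈ s, {x | ∀ t, x t ∉ rggCell u (m * u) p.1 p.2})
          ≤ rggMeasure n {x | ∃ t, x t ∉ rggSquare n}
            + rggMeasure n (⋃ p ∈ s, {x | ∀ t, x t ∉ rggCell u (m * u) p.1 p.2}) :=
            measure_union_le _ _
      _ = rggMeasure n (⋃ p ∈ s, {x | ∀ t, x t ∉ rggCell u (m * u) p.1 p.2}) := by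
            rw [prob_exists_coord_out, zero_add]
      _ ≤ ∑ p ∈ s, rggMeasure n {x | ∀ t, x t ∉ rggCell u (m * u) p.1 p.2} :=
            measure_biUnion_finset_le s _
      _ ≤ ∑ _p ∈ s, ENNReal.ofReal (Real.exp (-(2*u^2))) := by
            apply Finset.sum_le_sum
            intro p hp
            rw [hs, Finset.mem_product, Finset.mem_range, Finset.mem_range] at hp
            exact prob_allmiss_le hn0 (measurableSet_rggCell _ _ _ _)
              (rggCell_subset hu hn hp.1 (by omega))
              (by positivity) (by linarith) (volume_rggCell hu.le _ _ _)
      _ ≤ ENNReal.ofReal ((2*m) * (2*m-1) * Real.exp (-(2*u^2))) := by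
            rw [Finset.sum_const, hs, Finset.card_product, Finset.card_range, Finset.card_range]
            rw [nsmul_eq_mul, ← ENNReal.ofReal_natCast, ← ENNReal.ofReal_mul (by positivity)]
            apply ENNReal.ofReal_le_ofReal
            have hcast : (((2*m) * (2*m-1) : ℕ) : ℝ) = (2*(m:ℝ)) * (2*(m:ℝ)-1) := by
              push_cast [Nat.cast_sub (by omega : 1 ≤ 2*m)]
              ring
            rw [hcast]


/-- The 2-colouring by vertical strips of width `2u`. -/
noncomputable def rggCol (u s : ℝ) (p : EuclideanSpace ℝ (Fin 2)) : Fin 2 :=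
  if Even ⌊(p 0 + s) / (2 * u)⌋ then 0 else 1

lemma clamp_abs {s ζ : ℝ} (hs : 0 ≤ s) : |max (-s) (min s ζ)| ≤ s := by
  rw [abs_le]
  constructor
  · exact le_max_left _ _
  · exact max_le (by linarith) (min_le_left _ _)

lemma clamp_close {s ζ y : ℝ} (hy : |y| ≤ s) : |max (-s) (min s ζ) - y| ≤ |ζ - y| := by
  rw [abs_le] at hy
  rcases le_total ζ (-s) with h | h
  · have hmin : min s ζ = ζ := min_eq_right (by linarith)
    rw [hmin, max_eq_left (by linarith)]
    rw [abs_of_nonpos (by linarith), abs_of_nonpos (by linarith)]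
    linarith
  · rcases le_total s ζ with h2 | h2
    · rw [min_eq_left h2, max_eq_right (by linarith)]
      rw [abs_of_nonneg (by linarith), abs_of_nonneg (by linarith)]
      linarith
    · rw [min_eq_right h2, max_eq_right h]

lemma dist_le_of_coords {p q : EuclideanSpace ℝ (Fin 2)} {d0 d1 : ℝ}
    (h0 : |p 0 - q 0| ≤ d0) (h1 : |p 1 - q 1| ≤ d1) :
    dist p q ≤ Real.sqrt (d0 ^ 2 + d1 ^ 2) := by
  rw [EuclideanSpace.dist_eq, Fin.sum_univ_two]
  apply Real.sqrt_le_sqrt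
  have a0 : dist (p 0) (q 0) = |p 0 - q 0| := Real.dist_eq _ _
  have a1 : dist (p 1) (q 1) = |p 1 - q 1| := Real.dist_eq _ _
  rw [a0, a1]
  have := abs_nonneg (p 0 - q 0); have := abs_nonneg (p 1 - q 1)
  nlinarith

lemma dist_le_of_coords' {p q : EuclideanSpace ℝ (Fin 2)} {d : ℝ}
    (h0 : |p 0 - q 0| ≤ d) (h1 : |p 1 - q 1| ≤ d) (hd : 0 ≤ d) :
    dist p q ≤ 2 * d := by
  calc dist p q ≤ Real.sqrt (d^2 + d^2) := dist_le_of_coords h0 h1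
  _ ≤ 2 * d := by
      rw [show d^2 + d^2 = (2*d)^2/2 by ring]
      calc Real.sqrt ((2*d)^2/2) ≤ Real.sqrt ((2*d)^2) := by
            apply Real.sqrt_le_sqrt; nlinarith
      _ = 2*d := Real.sqrt_sq (by linarith)

/-- The deterministic heart: on the good event the clique chromatic number is 2. -/
lemma det_core {n m : ℕ} {u rr : ℝ} (hu : 0 < u) (hm : 2 ≤ m)
    (hn : Real.sqrt n = 2 * m * u) (hrr : 11 * u ≤ rr)
    (x : Fin n → EuclideanSpace ℝ (Fin 2)) (hx : RggGood n m u x) :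
    cliqueChromNum (geomGraph rr x) = 2 := by
  classical
  set G := geomGraph rr x with hG
  have hrr0 : 0 < rr := lt_of_lt_of_le (by linarith) hrr
  have hsq : ∀ t, ∀ i, |x t i| ≤ m * u := by
    intro t i
    have := hx.1 t i
    rwa [hn, show 2 * (m:ℝ) * u / 2 = m * u by ring] at this
  -- n is positive
  have hn0 : 0 < n := by
    by_contra hc
    push_neg at hc
    interval_cases n
    rw [Nat.cast_zero, Real.sqrt_zero] at hn
    have hm' : (2:ℝ) ≤ (m:ℝ) := by exact_mod_cast hm
    nlinarith
  -- membership of 2 in the colouring set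
  have h2mem : ∃ c : Fin n → Fin 2, IsCliqueColouring G c := by
    refine ⟨fun t => rggCol u (m * u) (x t), ?_⟩
    intro S hmax hcard ⟨a, ha⟩
    -- S is a clique, so pairwise distances at most rr
    have hSfin : S.Finite := Set.toFinite S
    set K := hSfin.toFinset with hK
    have hKS : ∀ {t}, t ∈ K ↔ t ∈ S := fun {t} => hSfin.mem_toFinset
    have hpair : ∀ i ∈ K, ∀ j ∈ K, dist (x i) (x j) ≤ rr := by
      intro i hi j hj
      rcases eq_or_ne i j with rfl | hij
      · simp [hrr0.le]
      · exact (show i ≠ j ∧ dist (x i) (x j) ≤ rr from hmax.1 (hKS.mp hi) (hKS.mp hj) hij).2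
    obtain ⟨z, hz⟩ := jung23 x hrr0.le hpair
    -- clamp z to the square
    set c : EuclideanSpace ℝ (Fin 2) :=
      WithLp.toLp 2 (fun i => max (-(m*u)) (min (m*u) (z i)) : Fin 2 → ℝ) with hc
    have hcmem : ∀ i, |c i| ≤ m * u := fun i => clamp_abs (by positivity)
    have hcz : ∀ k ∈ K, dist c (x k) ≤ 2/3 * rr := by
      intro k hk
      refine le_trans ?_ (hz k hk)
      rw [EuclideanSpace.dist_eq, EuclideanSpace.dist_eq]
      apply Real.sqrt_le_sqrt
      apply Finset.sum_le_sum
      intro i _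
      have h1 : dist (c i) (x k i) ≤ dist (z i) (x k i) := by
        rw [Real.dist_eq, Real.dist_eq]
        exact clamp_close (hsq k i)
      have h2 : (0:ℝ) ≤ dist (c i) (x k i) := dist_nonneg
      nlinarith
    -- pick opposite-parity column and a row
    set b : ℕ := if a = 0 then 1 else 0 with hb
    obtain ⟨i, hi2m, hipar, hilo, hihi⟩ :=
      exists_column hu hm b (t := c 0 + m * u)
        (by have := (abs_le.mp (hcmem 0)).1; linarith)
        (by have := (abs_le.mp (hcmem 0)).2; linarith)
    obtain ⟨j, hj2m, hjlo, hjhi⟩ :=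
      exists_row hu hm (t := c 1 + m * u)
        (by have := (abs_le.mp (hcmem 1)).1; linarith)
        (by have := (abs_le.mp (hcmem 1)).2; linarith)
    obtain ⟨t₀, ht₀⟩ := hx.2 i hi2m j hj2m
    obtain ⟨e1, e2, e3, e4⟩ := ht₀
    -- t₀ has the opposite colour
    have hcol : rggCol u (m*u) (x t₀) ≠ a := by
      have hfl : ⌊(x t₀ 0 + m*u) / (2*u)⌋ = (i / 2 : ℕ) :=
        floor_of_mem_column hu e1 e2
      rw [rggCol, hfl]
      have : Even ((i / 2 : ℕ) : ℤ) ↔ (i/2) % 2 = 0 := by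
        rw [Int.even_coe_nat, Nat.even_iff]
      by_cases ha0 : a = 0
      · have hb1 : b = 1 := by rw [hb, if_pos ha0]
        have hodd : ¬ Even ((i / 2 : ℕ) : ℤ) := by
          rw [Int.even_coe_nat, Nat.even_iff]
          omega
        rw [if_neg hodd, ha0]
        decide
      · have hv : (a : ℕ) ≠ 0 := fun h => ha0 (Fin.ext (by simpa using h))
        have hlt := a.isLt
        have ha1 : a = 1 := Fin.ext (by rw [Fin.val_one]; omega)
        have hb0 : b = 0 := by rw [hb, if_neg ha0]
        have heven : Even ((i / 2 : ℕ) : ℤ) := by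
          rw [Int.even_coe_nat, Nat.even_iff]
          omega
        rw [if_pos heven, ha1]
        decide
    have ht₀S : t₀ ∉ S := fun hmem => hcol (ha t₀ hmem)
    -- t₀ is adjacent to everything in S
    have hadj : ∀ k ∈ S, dist (x t₀) (x k) ≤ rr := by
      intro k hk
      have hd1 : dist (x t₀) c ≤ 11/3 * u := by
        have h0 : |x t₀ 0 - c 0| ≤ 3 * u := by
          rw [abs_le]; constructor <;> nlinarith
        have h1 : |x t₀ 1 - c 1| ≤ 2 * u := by
          rw [abs_le]; constructor <;> nlinarith
        calc dist (x t₀) c ≤ Real.sqrt ((3*u)^2 + (2*u)^2) := dist_le_of_coords h0 h1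
        _ ≤ 11/3 * u := by
            rw [show (3*u)^2 + (2*u)^2 = 13 * u^2 by ring]
            rw [show (13:ℝ) * u^2 = (Real.sqrt 13 * u)^2 by
              rw [mul_pow, Real.sq_sqrt (by norm_num)]]
            rw [Real.sqrt_sq (by positivity)]
            have : Real.sqrt 13 ≤ 11/3 := by
              rw [show (11:ℝ)/3 = Real.sqrt ((11/3)^2) by rw [Real.sqrt_sq (by norm_num)]]
              apply Real.sqrt_le_sqrt; norm_num
            nlinarith
      calc dist (x t₀) (x k) ≤ dist (x t₀) c + dist c (x k) := dist_triangle _ _ _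
      _ ≤ 11/3 * u + 2/3 * rr := add_le_add hd1 (hcz k (hKS.mpr hk))
      _ ≤ rr/3 + 2/3*rr := by linarith
      _ = rr := by ring
    -- contradiction with maximality
    have hclq : G.IsClique (S ∪ {t₀}) := by
      intro p hp q hq hpq
      simp only [Set.mem_union, Set.mem_singleton_iff] at hp hq
      rcases hp with hp | hp <;> rcases hq with hq | hq
      · exact hmax.1 hp hq hpq
      · have hd : dist (x p) (x q) ≤ rr := by
          rw [hq, _root_.dist_comm]; exact hadj p hp
        exact (show p ≠ q ∧ dist (x p) (x q) ≤ rr from ⟨hpq, hd⟩)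
      · have hd : dist (x p) (x q) ≤ rr := by
          rw [hp]; exact hadj q hq
        exact (show p ≠ q ∧ dist (x p) (x q) ≤ rr from ⟨hpq, hd⟩)
      · exact absurd (hp.trans hq.symm) hpq
    have := hmax.2 hclq Set.subset_union_left (Set.mem_union_right _ rfl)
    exact ht₀S this
  -- an edge exists, giving a maximal clique of size ≥ 2
  have hedge : ∃ M : Set (Fin n), Maximal G.IsClique M ∧ 2 ≤ M.ncard := by
    obtain ⟨t₁, f1, f2, f3, f4⟩ := hx.2 0 (by omega) 0 (by omega)
    obtain ⟨t₂, g1, g2, g3, g4⟩ := hx.2 1 (by omega) 0 (by omega)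
    simp only [Nat.cast_zero, Nat.cast_one, zero_mul, one_mul] at f1 f2 f3 f4 g1 g2 g3 g4
    have hne : t₁ ≠ t₂ := by
      intro hEq
      rw [hEq] at f2
      linarith
    have hdist : dist (x t₁) (x t₂) ≤ rr := by
      have h0 : |x t₁ 0 - x t₂ 0| ≤ 2*u := by rw [abs_le]; constructor <;> nlinarith
      have h1 : |x t₁ 1 - x t₂ 1| ≤ 2*u := by rw [abs_le]; constructor <;> nlinarith
      calc dist (x t₁) (x t₂) ≤ 2 * (2*u) := dist_le_of_coords' h0 h1 (by linarith)
      _ ≤ rr := by linarith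
    have hpairclq : G.IsClique {t₁, t₂} := by
      intro p hp q hq hpq
      simp only [Set.mem_insert_iff, Set.mem_singleton_iff] at hp hq
      rcases hp with hp | hp <;> rcases hq with hq | hq
      · exact absurd (hp.trans hq.symm) hpq
      · have hd : dist (x p) (x q) ≤ rr := by rw [hp, hq]; exact hdist
        exact (show p ≠ q ∧ dist (x p) (x q) ≤ rr from ⟨hpq, hd⟩)
      · have hd : dist (x p) (x q) ≤ rr := by
          rw [hp, hq, _root_.dist_comm]; exact hdist
        exact (show p ≠ q ∧ dist (x p) (x q) ≤ rr from ⟨hpq, hd⟩)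
      · exact absurd (hp.trans hq.symm) hpq
    obtain ⟨M, hMle, hMmax⟩ := Finite.exists_le_maximal hpairclq
    refine ⟨M, hMmax, ?_⟩
    have : 1 < M.ncard := by
      rw [Set.one_lt_ncard_iff (Set.toFinite M)]
      exact ⟨t₁, t₂, hMle (by simp), hMle (by simp), hne⟩
    omega
  -- conclude
  obtain ⟨M, hMmax, hMcard⟩ := hedge
  unfold cliqueChromNum
  apply le_antisymm
  · exact Nat.sInf_le h2mem
  · have h2' : (2:ℕ) ∈ {k : ℕ | ∃ c : Fin n → Fin k, IsCliqueColouring G c} := h2mem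
    apply le_csInf ⟨2, h2'⟩
    rintro k ⟨ck, hck⟩
    by_contra hlt
    push_neg at hlt
    interval_cases k
    · exact (ck ⟨0, hn0⟩).elim0
    · exact hck M hMmax hMcard ⟨ck ⟨0, hn0⟩, fun v _ => Subsingleton.elim _ _⟩


noncomputable def rggT (n : ℕ) : ℝ := Real.sqrt n / ((3/2) * Real.sqrt (Real.log n))
noncomputable def rggMm (n : ℕ) : ℕ := ⌊rggT n⌋₊
noncomputable def rggU (n : ℕ) : ℝ := Real.sqrt n / (2 * rggMm n)

lemma tendsto_sqrt_atTop' : Tendsto Real.sqrt atTop atTop := by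
  rw [tendsto_atTop_atTop]
  intro b
  refine ⟨max 0 (b^2), fun a ha => ?_⟩
  rcases le_or_gt b 0 with hb | hb
  · exact le_trans hb (Real.sqrt_nonneg a)
  · have h2 : b^2 ≤ a := le_trans (le_max_right _ _) ha
    calc b = Real.sqrt (b^2) := (Real.sqrt_sq hb.le).symm
    _ ≤ Real.sqrt a := Real.sqrt_le_sqrt h2

lemma tendsto_rggT : Tendsto rggT atTop atTop := by
  have hbig : Tendsto (fun n : ℕ => Real.sqrt (Real.sqrt n) / 3) atTop atTop := by
    apply Tendsto.atTop_div_const (by norm_num)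
    exact tendsto_sqrt_atTop'.comp (tendsto_sqrt_atTop'.comp tendsto_natCast_atTop_atTop)
  apply tendsto_atTop_mono' atTop ?_ hbig
  have hlog := Real.tendsto_log_atTop.comp (tendsto_natCast_atTop_atTop (R := ℝ))
  filter_upwards [eventually_ge_atTop 1, hlog.eventually_ge_atTop 1] with n hn1 hL1
  simp only [Function.comp_apply] at hL1
  have hn1' : (1:ℝ) ≤ n := by exact_mod_cast hn1
  set L := Real.log n with hL
  set sn := Real.sqrt n with hsn
  set s := Real.sqrt L with hs
  have hsn1 : 1 ≤ sn := by
    rw [hsn, show (1:ℝ) = Real.sqrt 1 by simp]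
    exact Real.sqrt_le_sqrt hn1'
  have hs1 : 1 ≤ s := by
    rw [hs, show (1:ℝ) = Real.sqrt 1 by simp]
    exact Real.sqrt_le_sqrt hL1
  have hsq_s : s^2 = L := Real.sq_sqrt (by linarith)
  have hsq_sn : sn^2 = (n:ℝ) := Real.sq_sqrt (by linarith)
  have hLsn : L ≤ 2 * sn := by
    have h1 : Real.log sn ≤ sn - 1 := Real.log_le_sub_one_of_pos (by linarith)
    have h2 : Real.log sn = L / 2 := by
      rw [hsn, Real.log_sqrt (by linarith : (0:ℝ) ≤ n)]
    linarith
  set ss := Real.sqrt sn with hss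
  have hss1 : 1 ≤ ss := by
    rw [hss, show (1:ℝ) = Real.sqrt 1 by simp]
    exact Real.sqrt_le_sqrt hsn1
  have hsq_ss : ss^2 = sn := Real.sq_sqrt (by linarith)
  have hs2ss : s ≤ 2 * ss := by
    nlinarith [Real.sqrt_nonneg L, Real.sqrt_nonneg sn]
  show ss / 3 ≤ rggT n
  rw [rggT]
  rw [div_le_div_iff₀ (by norm_num) (by positivity)]
  nlinarith

lemma tendsto_rggMm : Tendsto rggMm atTop atTop :=
  tendsto_nat_floor_atTop.comp tendsto_rggT

lemma rgg_eventually (r : ℕ → ℝ)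
    (h : ∀ᶠ n : ℕ in atTop, 9.27 * Real.sqrt (Real.log n) ≤ r n) :
    ∀ᶠ n : ℕ in atTop,
      2 ≤ rggMm n ∧ 0 < n ∧ 0 < rggU n ∧
      Real.sqrt n = 2 * rggMm n * rggU n ∧
      11 * rggU n ≤ r n ∧ 2 * (rggU n)^2 ≤ n ∧
      (2*(rggMm n):ℝ) * (2*(rggMm n) - 1) * Real.exp (-(2*(rggU n)^2))
        ≤ Real.exp (-(Real.log n / 8)) := by
  have hlog := Real.tendsto_log_atTop.comp (tendsto_natCast_atTop_atTop (R := ℝ))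
  filter_upwards [h, hlog.eventually_ge_atTop 16, tendsto_rggT.eventually_ge_atTop 16,
    eventually_ge_atTop 1] with n hr9 hL16 hT16 hn1
  simp only [Function.comp_apply] at hL16
  set L := Real.log n with hLd
  set s := Real.sqrt L with hsd
  set sn := Real.sqrt n with hsnd
  set T := rggT n with hTd
  set M := rggMm n with hMd
  have hn1' : (1:ℝ) ≤ n := by exact_mod_cast hn1
  have hs4 : 4 ≤ s := by
    rw [hsd, show (4:ℝ) = Real.sqrt 16 by rw [show (16:ℝ) = 4^2 by norm_num, Real.sqrt_sq]; norm_num]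
    exact Real.sqrt_le_sqrt hL16
  have hsq_s : s^2 = L := Real.sq_sqrt (by linarith)
  have hsq_sn : sn^2 = (n:ℝ) := Real.sq_sqrt (by linarith)
  have hsn1 : 1 ≤ sn := by
    rw [hsnd, show (1:ℝ) = Real.sqrt 1 by simp]
    exact Real.sqrt_le_sqrt hn1'
  have hLsn : L ≤ 2 * sn := by
    have h1 : Real.log sn ≤ sn - 1 := Real.log_le_sub_one_of_pos (by linarith)
    have h2 : Real.log sn = L / 2 := by
      rw [hsnd, Real.log_sqrt (by linarith : (0:ℝ) ≤ n)]
    linarith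
  have hsn9 : 9 ≤ sn := by
    have h1 : Real.log sn ≤ sn - 1 := Real.log_le_sub_one_of_pos (by linarith)
    have h2 : Real.log sn = L / 2 := by
      rw [hsnd, Real.log_sqrt (by linarith : (0:ℝ) ≤ n)]
    linarith
  have hTval : T = sn / ((3/2) * s) := by rw [hTd, rggT]
  have hM16 : 16 ≤ M := by
    rw [hMd, rggMm]
    exact Nat.le_floor (by exact_mod_cast hT16)
  have hMT : (M:ℝ) ≤ T := by
    rw [hMd, rggMm]
    exact Nat.floor_le (by linarith)
  have hTM1 : T - 1 ≤ (M:ℝ) := by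
    rw [hMd, rggMm]
    exact le_of_lt (Nat.sub_one_lt_floor T)
  have hM0 : (0:ℝ) < M := by
    have : (16:ℝ) ≤ M := by exact_mod_cast hM16
    linarith
  have hT0 : 0 < T := by linarith
  have huval : rggU n = sn / (2 * M) := by rw [rggU, hMd]
  have hu0 : 0 < rggU n := by
    rw [huval]
    positivity
  have h2mu : sn = 2 * M * rggU n := by
    rw [huval]
    field_simp
  have hsnT : T * (3/2 * s) = sn := by
    rw [hTval]
    field_simp
  have hulow : 3/4 * s ≤ rggU n := by
    rw [huval, le_div_iff₀ (by positivity)]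
    have h2 : (M:ℝ) * (3/2 * s) ≤ sn := by
      have h1 : (M:ℝ) ≤ sn / (3/2 * s) := hTval ▸ hMT
      exact (le_div_iff₀ (by positivity)).mp h1
    nlinarith
  have huhigh : rggU n ≤ 4/5 * s := by
    have hM15 : 15/16 * T ≤ (M:ℝ) := by linarith
    rw [huval, div_le_iff₀ (by positivity)]
    nlinarith [mul_le_mul_of_nonneg_left hM15 (by positivity : (0:ℝ) ≤ s)]
  refine ⟨by omega, by omega, hu0, h2mu, ?_, ?_, ?_⟩
  · calc 11 * rggU n ≤ 11 * (4/5 * s) := by linarith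
    _ ≤ 9.27 * s := by linarith
    _ ≤ r n := hr9
  · have hu2 : (rggU n)^2 ≤ 16/25 * L := by nlinarith
    nlinarith
  · have hexp : Real.exp (-(2*(rggU n)^2)) ≤ Real.exp (-(9/8 * L)) := by
      apply Real.exp_le_exp.mpr
      have : 9/8 * L ≤ 2 * (rggU n)^2 := by nlinarith
      linarith
    have hL0 : (0:ℝ) < L := by linarith
    have hcount : (2*(M:ℝ)) * (2*(M:ℝ) - 1) ≤ (n:ℝ) := by
      have e1 : T^2 * ((9/4)*L) = (n:ℝ) := by
        have e0 : T^2 * ((9/4)*L) = (T * (3/2*s))^2 := by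
          rw [← hsq_s]; ring
        rw [e0, hsnT, hsq_sn]
      have e2 : (M:ℝ)^2 ≤ T^2 := by nlinarith
      have h1 : (M:ℝ)^2 * ((9/4)*L) ≤ (n:ℝ) := by nlinarith
      nlinarith
    calc (2*(M:ℝ)) * (2*(M:ℝ) - 1) * Real.exp (-(2*(rggU n)^2))
        ≤ (n:ℝ) * Real.exp (-(9/8 * L)) := by
          apply mul_le_mul hcount hexp (Real.exp_pos _).le (by positivity)
    _ = Real.exp (-(L/8)) := by
        rw [show (n:ℝ) = Real.exp L by rw [hLd, Real.exp_log (by linarith)]]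
        rw [← Real.exp_add]
        congr 1
        ring

/-- If eventually `r(n) ≥ 9.27 √(log n)`, then whp `χ_c(G(n, r(n))) = 2`. -/
theorem rgg_cliqueChromNum_eq_two_dense (r : ℕ → ℝ) (hr : ∀ n, 0 < r n)
    (h : ∀ᶠ n : ℕ in atTop, 9.27 * Real.sqrt (Real.log n) ≤ r n) :
    Tendsto (fun n : ℕ =>
        rggMeasure n {x | cliqueChromNum (geomGraph (r n) x) = 2})
      atTop (nhds 1) := by
  rw [ENNReal.tendsto_nhds (show (1:ENNReal) ≠ ⊤ by norm_num)]
  intro ε hε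
  have hδ : Tendsto (fun n : ℕ => Real.exp (-(Real.log n / 8))) atTop (nhds 0) := by
    apply Real.tendsto_exp_atBot.comp
    apply tendsto_neg_atTop_atBot.comp
    exact (Real.tendsto_log_atTop.comp
      (tendsto_natCast_atTop_atTop (R := ℝ))).atTop_div_const (by norm_num)
  set ε' := min ε 1 with hε'def
  have hε'0 : 0 < ε' := lt_min hε zero_lt_one
  have hε'top : ε' ≠ ⊤ := ne_top_of_le_ne_top (by norm_num) (min_le_right _ _)
  have hε'r : 0 < ε'.toReal := ENNReal.toReal_pos hε'0.ne' hε'top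
  have hδ' : ∀ᶠ n : ℕ in atTop, Real.exp (-(Real.log n / 8)) ≤ ε'.toReal :=
    hδ.eventually (eventually_le_nhds hε'r)
  filter_upwards [rgg_eventually r h, hδ'] with n hp hdlt
  obtain ⟨hM2, hn0, hu0, h2mu, h11u, h2un, hDb⟩ := hp
  have hsub : {x : Fin n → EuclideanSpace ℝ (Fin 2) | RggGood n (rggMm n) (rggU n) x}
      ⊆ {x | cliqueChromNum (geomGraph (r n) x) = 2} := by
    intro x hx
    exact det_core hu0 hM2 h2mu h11u x hx
  rw [Set.mem_Icc]
  constructor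
  · have h1 := good_event_bound hu0 hM2 hn0 h2mu h2un
    have h2 : (1:ENNReal) ≤ rggMeasure n {x | cliqueChromNum (geomGraph (r n) x) = 2} + ε' := by
      refine le_trans h1 (add_le_add ?_ ?_)
      · exact measure_mono hsub
      · calc ENNReal.ofReal ((2*(rggMm n)) * (2*(rggMm n)-1) * Real.exp (-(2*(rggU n)^2)))
            ≤ ENNReal.ofReal (Real.exp (-(Real.log n / 8))) := ENNReal.ofReal_le_ofReal hDb
        _ ≤ ENNReal.ofReal ε'.toReal := ENNReal.ofReal_le_ofReal hdlt
        _ = ε' := ENNReal.ofReal_toReal hε'top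
    calc 1 - ε ≤ 1 - ε' := tsub_le_tsub_left (min_le_left ε 1) 1
    _ ≤ _ := tsub_le_iff_right.mpr h2
  · calc rggMeasure n {x | cliqueChromNum (geomGraph (r n) x) = 2}
        ≤ rggMeasure n Set.univ := measure_mono (Set.subset_univ _)
    _ = 1 := rggMeasure_univ hn0
    _ ≤ 1 + ε := le_self_add
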